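/- arXiv:1204.2722 — 2 statements merged into one kernel-verified Lean document; each statement's English description precedes it below -/
import Mathlib

section
/- Let σ be the set of 15 five-fold Kronecker products of matrices from {σ₀, σ₁, σ₃} given by all cyclic permutations of the strings (σ₀,σ₁,σ₁,σ₁,σ₃), (σ₀,σ₃,σ₁,σ₁,σ₃), and (σ₀,σ₃,σ₁,σ₃,σ₃), and for a 32×32 density matrix ρ define Q(ρ) = ∑_{s∈σ} (Re(trace(ρ * s)))². Then for every fully separable 5-qubit state — i.e., every ρ of the form ρ = ∑_k p_k • (ρ_k^{(1)} ⊗ ρ_k^{(2)} ⊗ ρ_k^{(3)} ⊗ ρ_k^{(4)} ⊗ ρ_k^{(5)}) with p_k ≥ 0, ∑_k p_k = 1, and each ρ_k^{(m)} a 2×2 density matrix — one has Q(ρ) ≤ 1. -/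
open Matrix
open ComplexOrder

/-- The 2×2 identity matrix `σ₀`. -/
noncomputable def pauli0 : Matrix (Fin 2) (Fin 2) ℂ := 1

/-- The Pauli matrix `σ₁ = x`. -/
noncomputable def pauli1 : Matrix (Fin 2) (Fin 2) ℂ := !![0, 1; 1, 0]

/-- The Pauli matrix `σ₃ = z`. -/
noncomputable def pauli3 : Matrix (Fin 2) (Fin 2) ℂ := !![1, 0; 0, -1]

/-- The five-fold Kronecker product of single-qubit matrices, as a 32×32 matrix
indexed by `Fin 5 → Fin 2`. -/
noncomputable def kron5 (M : Fin 5 → Matrix (Fin 2) (Fin 2) ℂ) :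
    Matrix (Fin 5 → Fin 2) (Fin 5 → Fin 2) ℂ :=
  Matrix.of fun i j => ∏ m, M m (i m) (j m)

/-- The three base words `1xxxz`, `1zxxz`, `1zxzz`. -/
noncomputable def baseWord : Fin 3 → Fin 5 → Matrix (Fin 2) (Fin 2) ℂ
  | 0 => ![pauli0, pauli1, pauli1, pauli1, pauli3]
  | 1 => ![pauli0, pauli3, pauli1, pauli1, pauli3]
  | 2 => ![pauli0, pauli3, pauli1, pauli3, pauli3]

/-- The element of σ obtained as the `k`-th cyclic permutation of the `w`-th base
word; as `w` ranges over `Fin 3` and `k` over `Fin 5` this enumerates the 15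
(pairwise distinct) elements of σ = CP(1xxxz) ∪ CP(1zxxz) ∪ CP(1zxzz). -/
noncomputable def sigmaOp (w : Fin 3) (k : Fin 5) :
    Matrix (Fin 5 → Fin 2) (Fin 5 → Fin 2) ℂ :=
  kron5 (fun m => baseWord w (m + k))

/-- `Q(ρ) = ∑_{s ∈ σ} (Re tr(ρ s))²`. -/
noncomputable def Q (ρ : Matrix (Fin 5 → Fin 2) (Fin 5 → Fin 2) ℂ) : ℝ :=
  ∑ w : Fin 3, ∑ k : Fin 5, ((ρ * sigmaOp w k).trace.re) ^ 2

/-- A density matrix: positive semidefinite with trace 1. -/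
def IsDensityMatrix {n : Type*} [Fintype n] [DecidableEq n]
    (ρ : Matrix n n ℂ) : Prop :=
  ρ.PosSemidef ∧ ρ.trace = 1

/-! ### Auxiliary lemmas -/

def wtab : Fin 3 → Fin 5 → Fin 3 → Fin 5 → Fin 3 :=
  ![![(fun e => ![e, 0, 0, 0, 1]), (fun e => ![0, 0, 0, 1, e]), (fun e => ![0, 0, 1, e, 0]), (fun e => ![0, 1, e, 0, 0]), (fun e => ![1, e, 0, 0, 0])],
   ![(fun e => ![e, 1, 0, 0, 1]), (fun e => ![1, 0, 0, 1, e]), (fun e => ![0, 0, 1, e, 1]), (fun e => ![0, 1, e, 1, 0]), (fun e => ![1, e, 1, 0, 0])],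
   ![(fun e => ![e, 1, 0, 1, 1]), (fun e => ![1, 0, 1, 1, e]), (fun e => ![0, 1, 1, e, 1]), (fun e => ![1, 1, e, 1, 0]), (fun e => ![1, e, 1, 0, 1])]]

def wrd : Fin 3 × Fin 5 × Fin 3 → (Fin 5 → Fin 3) := fun t => wtab t.1 t.2.1 t.2.2

set_option maxHeartbeats 8000000 in
lemma wrd_inj : Function.Injective wrd := by decide

set_option maxHeartbeats 1000000 in
lemma comb (a b c : Fin 5 → ℝ) (ha : ∀ m, 0 ≤ a m) (hb : ∀ m, 0 ≤ b m)
    (hc : ∀ m, 0 ≤ c m) (habc : ∀ m, a m + b m + c m = 1) :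
    a 1 * a 2 * a 3 * b 4 + a 0 * a 1 * a 2 * b 3 + a 0 * a 1 * b 2 * a 4 + a 0 * b 1 * a 3 * a 4 + b 0 * a 2 * a 3 * a 4 + b 1 * a 2 * a 3 * b 4 + b 0 * a 1 * a 2 * b 3 + a 0 * a 1 * b 2 * b 4 + a 0 * b 1 * b 3 * a 4 + b 0 * b 2 * a 3 * a 4 + b 1 * a 2 * b 3 * b 4 + b 0 * a 1 * b 2 * b 3 + a 0 * b 1 * b 2 * b 4 + b 0 * b 1 * b 3 * a 4 + b 0 * b 2 * a 3 * b 4 ≤ 1 := by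
  have hLnn : ∀ m (j : Fin 3), 0 ≤ ![a m, b m, c m] j := by
    intro m j; fin_cases j <;> simp [ha m, hb m, hc m]
  have hmono : ∀ u : Fin 5 → Fin 3, 0 ≤ ∏ m, ![a m, b m, c m] (u m) :=
    fun u => Finset.prod_nonneg fun m _ => hLnn m (u m)
  have hsum : ∑ u : Fin 5 → Fin 3, ∏ m, ![a m, b m, c m] (u m) = 1 := by
    rw [← Fintype.prod_sum fun m (j : Fin 3) => ![a m, b m, c m] j]
    have h1 : ∀ m, ∑ j : Fin 3, ![a m, b m, c m] j = 1 := by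
      intro m; rw [Fin.sum_univ_three]
      simp only [Matrix.cons_val_zero, Matrix.cons_val_one, Matrix.head_cons,
        Matrix.cons_val_two, Matrix.tail_cons]
      linarith [habc m]
    simp [h1]
  have hS : a 1 * a 2 * a 3 * b 4 + a 0 * a 1 * a 2 * b 3 + a 0 * a 1 * b 2 * a 4 + a 0 * b 1 * a 3 * a 4 + b 0 * a 2 * a 3 * a 4 + b 1 * a 2 * a 3 * b 4 + b 0 * a 1 * a 2 * b 3 + a 0 * a 1 * b 2 * b 4 + a 0 * b 1 * b 3 * a 4 + b 0 * b 2 * a 3 * a 4 + b 1 * a 2 * b 3 * b 4 + b 0 * a 1 * b 2 * b 3 + a 0 * b 1 * b 2 * b 4 + b 0 * b 1 * b 3 * a 4 + b 0 * b 2 * a 3 * b 4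
      = ∑ t : Fin 3 × Fin 5 × Fin 3, ∏ m, ![a m, b m, c m] (wrd t m) := by
    simp only [Fintype.sum_prod_type, Fin.sum_univ_three, Fin.sum_univ_five,
      Fin.prod_univ_five, wrd, wtab, Matrix.cons_val_zero, Matrix.cons_val_one,
      Matrix.head_cons, Matrix.cons_val_two, Matrix.tail_cons,
      Matrix.cons_val_three, Matrix.cons_val_four, Matrix.head_fin_const]
    linear_combination - (a 1 * a 2 * a 3 * b 4 + b 1 * a 2 * a 3 * b 4 + b 1 * a 2 * b 3 * b 4) * habc 0 - (b 0 * a 2 * a 3 * a 4 + b 0 * b 2 * a 3 * a 4 + b 0 * b 2 * a 3 * b 4) * habc 1 - (a 0 * b 1 * a 3 * a 4 + a 0 * b 1 * b 3 * a 4 + b 0 * b 1 * b 3 * a 4) * habc 2 - (a 0 * a 1 * b 2 * a 4 + a 0 * a 1 * b 2 * b 4 + a 0 * b 1 * b 2 * b 4) * habc 3 - (a 0 * a 1 * a 2 * b 3 + b 0 * a 1 * a 2 * b 3 + b 0 * a 1 * b 2 * b 3) * habc 4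
  rw [hS]
  calc ∑ t : Fin 3 × Fin 5 × Fin 3, ∏ m, ![a m, b m, c m] (wrd t m)
      = ∑ u ∈ Finset.univ.image wrd, ∏ m, ![a m, b m, c m] (u m) :=
        (Finset.sum_image (f := fun u => ∏ m, ![a m, b m, c m] (u m))
          (fun t _ t' _ h => wrd_inj h)).symm
    _ ≤ ∑ u : Fin 5 → Fin 3, ∏ m, ![a m, b m, c m] (u m) :=
        Finset.sum_le_sum_of_subset_of_nonneg (Finset.subset_univ _)
          (fun u _ _ => hmono u)
    _ = 1 := hsum

lemma kron5_mul (A B : Fin 5 → Matrix (Fin 2) (Fin 2) ℂ) :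
    kron5 A * kron5 B = kron5 (fun m => A m * B m) := by
  ext i j
  simp only [kron5, Matrix.mul_apply, Matrix.of_apply]
  rw [Fintype.prod_sum fun m x => A m (i m) x * B m x (j m)]
  congr 1; ext g
  rw [← Finset.prod_mul_distrib]

lemma trace_kron5 (C : Fin 5 → Matrix (Fin 2) (Fin 2) ℂ) :
    (kron5 C).trace = ∏ m, (C m).trace := by
  simp only [Matrix.trace, Matrix.diag, kron5, Matrix.of_apply]
  rw [Fintype.prod_sum fun m x => C m x x]

section qubit
variable {ρ : Matrix (Fin 2) (Fin 2) ℂ}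

lemma tr_p0 (h : IsDensityMatrix ρ) : (ρ * pauli0).trace = 1 := by
  simp [pauli0, h.2]

lemma tr_p1 : (ρ * pauli1).trace = ρ 0 1 + ρ 1 0 := by
  simp [Matrix.trace, Matrix.mul_apply, pauli1, Fin.sum_univ_two]

lemma tr_p3 : (ρ * pauli3).trace = ρ 0 0 - ρ 1 1 := by
  simp [Matrix.trace, Matrix.mul_apply, pauli3, Fin.sum_univ_two]
  ring

lemma qubit_real1 (h : IsDensityMatrix ρ) :
    (ρ * pauli1).trace = (((ρ * pauli1).trace.re : ℝ) : ℂ) := by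
  have h10 : ρ 1 0 = star (ρ 0 1) := by
    rw [← Matrix.conjTranspose_apply, h.1.1]
  rw [tr_p1, h10]
  apply Complex.ext <;> simp

lemma qubit_real3 (h : IsDensityMatrix ρ) :
    (ρ * pauli3).trace = (((ρ * pauli3).trace.re : ℝ) : ℂ) := by
  have h00 : ρ 0 0 = star (ρ 0 0) := by
    conv_lhs => rw [← h.1.1, Matrix.conjTranspose_apply]
  have h11 : ρ 1 1 = star (ρ 1 1) := by
    conv_lhs => rw [← h.1.1, Matrix.conjTranspose_apply]
  rw [tr_p3]
  apply Complex.ext <;>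
    simp [Complex.ext_iff, Complex.conj_re, Complex.conj_im] at h00 h11 ⊢ <;> linarith

lemma qubit_bound (h : IsDensityMatrix ρ) :
    ((ρ * pauli1).trace.re) ^ 2 + ((ρ * pauli3).trace.re) ^ 2 ≤ 1 := by
  have h10 : ρ 1 0 = star (ρ 0 1) := by
    rw [← Matrix.conjTranspose_apply, h.1.1]
  set r0 := (ρ 0 0).re
  set r1 := (ρ 1 1).re
  set u := (ρ 0 1).re
  have htr : r0 + r1 = 1 := by
    have := h.2
    simp [Matrix.trace, Fin.sum_univ_two] at this
    have := congrArg Complex.re this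
    simpa using this
  have hq : ∀ t : ℝ, 0 ≤ r0 * (t * t) + (2 * u) * t + r1 := by
    intro t
    have hv := h.1.dotProduct_mulVec_nonneg ![(t : ℂ), 1]
    rw [Complex.le_def] at hv
    have hre := hv.1
    simp only [dotProduct, Matrix.mulVec, Fin.sum_univ_two,
      Pi.star_apply, Matrix.cons_val_zero, Matrix.cons_val_one, Matrix.head_cons,
      dotProduct] at hre
    simp [h10, Complex.add_re, Complex.mul_re, Complex.mul_im] at hre
    ring_nf at hre ⊢
    nlinarith [hre]
  have hd := discrim_le_zero hq
  rw [discrim] at hd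
  rw [tr_p1, tr_p3, h10]
  have e1 : (ρ 0 1 + star (ρ 0 1)).re = 2 * u := by simp [u]; ring
  have e3 : (ρ 0 0 - ρ 1 1).re = r0 - r1 := by simp [r0, r1]
  rw [e1, e3]
  nlinarith [hd, htr]
end qubit

lemma cs_step {K : ℕ} (p : Fin K → ℝ) (hp : ∀ k, 0 ≤ p k) (hp1 : ∑ k, p k = 1)
    (t : Fin K → ℝ) : (∑ k, p k * t k) ^ 2 ≤ ∑ k, p k * t k ^ 2 := by
  have h := Finset.sum_mul_sq_le_sq_mul_sq Finset.univ
    (fun k => Real.sqrt (p k)) (fun k => Real.sqrt (p k) * t k)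
  have e1 : ∀ k, Real.sqrt (p k) * (Real.sqrt (p k) * t k) = p k * t k := fun k => by
    rw [← mul_assoc, Real.mul_self_sqrt (hp k)]
  have e2 : ∀ k, Real.sqrt (p k) ^ 2 = p k := fun k => Real.sq_sqrt (hp k)
  have e3 : ∀ k, (Real.sqrt (p k) * t k) ^ 2 = p k * t k ^ 2 := fun k => by
    rw [mul_pow, e2]
  simp only [e1, e2, e3] at h
  calc (∑ k, p k * t k) ^ 2 ≤ (∑ k, p k) * ∑ k, p k * t k ^ 2 := h
    _ = ∑ k, p k * t k ^ 2 := by rw [hp1, one_mul]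


lemma constituent (ρ5 : Fin 5 → Matrix (Fin 2) (Fin 2) ℂ)
    (hd : ∀ m, IsDensityMatrix (ρ5 m)) :
    ∑ w : Fin 3, ∑ i : Fin 5, ((kron5 ρ5 * sigmaOp w i).trace.re) ^ 2 ≤ 1 := by
  have hfac : ∀ (w : Fin 3) (i : Fin 5), (kron5 ρ5 * sigmaOp w i).trace
      = ∏ m, ((ρ5 m) * baseWord w (m + i)).trace := by
    intro w i
    rw [sigmaOp, kron5_mul, trace_kron5]
  set X : Fin 5 → ℝ := fun m => ((ρ5 m * pauli1).trace).re with hX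
  set Z : Fin 5 → ℝ := fun m => ((ρ5 m * pauli3).trace).re with hZ
  have E0 : ∀ m, ((ρ5 m) * pauli0).trace = ((1 : ℝ) : ℂ) := fun m => by
    rw [tr_p0 (hd m)]; norm_num
  have E1 : ∀ m, ((ρ5 m) * pauli1).trace = ((X m : ℝ) : ℂ) := fun m =>
    qubit_real1 (hd m)
  have E3 : ∀ m, ((ρ5 m) * pauli3).trace = ((Z m : ℝ) : ℂ) := fun m =>
    qubit_real3 (hd m)
  have hb : ∀ m, X m ^ 2 + Z m ^ 2 ≤ 1 := fun m => qubit_bound (hd m)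
  rw [Fin.sum_univ_three, Fin.sum_univ_five, Fin.sum_univ_five, Fin.sum_univ_five]
  simp only [hfac, Fin.prod_univ_five, baseWord, Fin.reduceAdd, Fin.isValue,
    Matrix.cons_val_zero, Matrix.cons_val_one, Matrix.head_cons,
    Matrix.cons_val_two, Matrix.tail_cons, Matrix.cons_val_three,
    Matrix.cons_val_four, Matrix.head_fin_const,
    E0, E1, E3, ← Complex.ofReal_mul, Complex.ofReal_re, one_mul, mul_one]
  refine le_trans (le_of_eq ?_)
    (comb (fun m => X m ^ 2) (fun m => Z m ^ 2)
      (fun m => 1 - X m ^ 2 - Z m ^ 2)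
      (fun m => by positivity) (fun m => by positivity)
      (fun m => by have := hb m; beta_reduce; linarith)
      (fun m => by beta_reduce; ring))
  beta_reduce
  ring

/-- For every fully separable 5-qubit state, `Q(ρ) ≤ 1`. -/
theorem fully_separable_Q_le_one {K : ℕ}
    (p : Fin K → ℝ) (hp : ∀ k, 0 ≤ p k) (hp1 : ∑ k, p k = 1)
    (ρs : Fin K → Fin 5 → Matrix (Fin 2) (Fin 2) ℂ)
    (hρs : ∀ k m, IsDensityMatrix (ρs k m))
    (ρ : Matrix (Fin 5 → Fin 2) (Fin 5 → Fin 2) ℂ)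
    (hρ : ρ = ∑ k, (p k : ℂ) • kron5 (ρs k)) :
    Q ρ ≤ 1 := by
  have hk : ∀ k, ∑ w : Fin 3, ∑ i : Fin 5,
      ((kron5 (ρs k) * sigmaOp w i).trace.re) ^ 2 ≤ 1 :=
    fun k => constituent (ρs k) (hρs k)
  have hlin : ∀ (w : Fin 3) (i : Fin 5), (ρ * sigmaOp w i).trace.re
      = ∑ k, p k * ((kron5 (ρs k) * sigmaOp w i).trace.re) := by
    intro w i
    rw [hρ, Finset.sum_mul, Matrix.trace_sum]
    rw [Complex.re_sum]
    refine Finset.sum_congr rfl fun k _ => ?_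
    rw [smul_mul_assoc, Matrix.trace_smul]
    simp [Complex.mul_re]
  have swap3 : ∀ (F : Fin 3 → Fin 5 → Fin K → ℝ),
      ∑ w, ∑ i, ∑ k, F w i k = ∑ k, ∑ w, ∑ i, F w i k := by
    intro F
    calc ∑ w, ∑ i, ∑ k, F w i k
        = ∑ w, ∑ k, ∑ i, F w i k :=
          Finset.sum_congr rfl fun w _ => Finset.sum_comm
      _ = ∑ k, ∑ w, ∑ i, F w i k := Finset.sum_comm
  calc Q ρ = ∑ w : Fin 3, ∑ i : Fin 5,
        (∑ k, p k * ((kron5 (ρs k) * sigmaOp w i).trace.re)) ^ 2 := by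
        simp only [Q, hlin]
    _ ≤ ∑ w : Fin 3, ∑ i : Fin 5,
        ∑ k, p k * ((kron5 (ρs k) * sigmaOp w i).trace.re) ^ 2 := by
        refine Finset.sum_le_sum fun w _ => Finset.sum_le_sum fun i _ => ?_
        exact cs_step p hp hp1 _
    _ = ∑ k, ∑ w : Fin 3, ∑ i : Fin 5,
        p k * ((kron5 (ρs k) * sigmaOp w i).trace.re) ^ 2 := swap3 _
    _ ≤ ∑ k, p k * 1 := by
        refine Finset.sum_le_sum fun k _ => ?_
        simp_rw [← Finset.mul_sum]
        exact mul_le_mul_of_nonneg_left (hk k) (hp k)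
    _ = 1 := by simp [hp1]
end

section
/- Let σ₃-set = {x⊗x⊗x, y⊗x⊗x, x⊗y⊗x, y⊗y⊗x, x⊗x⊗y, y⊗x⊗y, x⊗y⊗y, y⊗y⊗y} be the 8 three-fold Kronecker products of x = σ₁ and y = σ₂, and for an 8×8 density matrix ρ define Q(ρ) = ∑_{s∈σ₃-set} (Re(trace(ρ * s)))². Then for every 8×8 density matrix ρ (i.e., for an arbitrary, possibly entangled, 3-qubit state) one has Q(ρ) ≤ 4, the independence number of the anticommutativity graph of the operator set. -/
open Matrix
open ComplexOrder

/-- The Pauli matrix `x = σ₁`. -/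
noncomputable def pauliX : Matrix (Fin 2) (Fin 2) ℂ := !![0, 1; 1, 0]

/-- The Pauli matrix `y = σ₂`. -/
noncomputable def pauliY : Matrix (Fin 2) (Fin 2) ℂ := !![0, -Complex.I; Complex.I, 0]

/-- `![x, y]`: chooses `x` or `y`. -/
noncomputable def xy : Fin 2 → Matrix (Fin 2) (Fin 2) ℂ := ![pauliX, pauliY]

/-- The three-fold Kronecker product of single-qubit matrices, as an 8×8 matrix
indexed by `Fin 3 → Fin 2`. -/
noncomputable def kron3 (M : Fin 3 → Matrix (Fin 2) (Fin 2) ℂ) :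
    Matrix (Fin 3 → Fin 2) (Fin 3 → Fin 2) ℂ :=
  Matrix.of fun i j => ∏ m, M m (i m) (j m)

/-- `Q(ρ) = ∑_{s ∈ σ} (Re tr(ρ s))²`, where σ is the set of the 8 (pairwise
distinct) three-fold tensor products of `x` and `y`:
`{xxx, yxx, xyx, yyx, xxy, yxy, xyy, yyy}`. -/
noncomputable def Q3 (ρ : Matrix (Fin 3 → Fin 2) (Fin 3 → Fin 2) ℂ) : ℝ :=
  ∑ f : Fin 3 → Fin 2, ((ρ * kron3 (fun m => xy (f m))).trace.re) ^ 2

/-! ### Auxiliary lemmas -/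

lemma kron3_mul (M N : Fin 3 → Matrix (Fin 2) (Fin 2) ℂ) :
    kron3 M * kron3 N = kron3 (fun m => M m * N m) := by
  ext i j
  simp only [kron3, Matrix.mul_apply, Matrix.of_apply]
  rw [Finset.prod_univ_sum]
  rw [show (Fintype.piFinset fun _ : Fin 3 => (Finset.univ : Finset (Fin 2))) = Finset.univ by
    ext; simp]
  exact Finset.sum_congr rfl fun k _ => (Finset.prod_mul_distrib).symm

lemma kron3_one : kron3 (fun _ => 1) = 1 := by
  ext i j
  simp only [kron3, Matrix.of_apply, Matrix.one_apply]
  by_cases h : i = j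
  · subst h; simp
  · rw [if_neg h]
    obtain ⟨m, hm⟩ : ∃ m, i m ≠ j m := by
      by_contra hc; push_neg at hc; exact h (funext hc)
    exact Finset.prod_eq_zero (Finset.mem_univ m) (if_neg hm)

lemma kron3_conjTranspose (M : Fin 3 → Matrix (Fin 2) (Fin 2) ℂ) :
    (kron3 M)ᴴ = kron3 (fun m => (M m)ᴴ) := by
  ext i j
  simp only [kron3, Matrix.conjTranspose_apply, Matrix.of_apply]
  exact star_prod _ _

lemma kron3_neg (M : Fin 3 → Matrix (Fin 2) (Fin 2) ℂ) :
    kron3 (fun m => -(M m)) = -kron3 M := by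
  ext i j
  simp only [kron3, Matrix.of_apply, Matrix.neg_apply, Fin.prod_univ_three]
  ring

lemma xy_mul_self (c : Fin 2) : xy c * xy c = 1 := by
  fin_cases c <;>
    simp [xy, pauliX, pauliY, Matrix.mul_fin_two, Matrix.one_fin_two, Complex.I_mul_I]

lemma xy_herm (c : Fin 2) : (xy c)ᴴ = xy c := by
  fin_cases c <;> ext i j <;> fin_cases i <;> fin_cases j <;>
    simp [xy, pauliX, pauliY, Matrix.conjTranspose_apply]

lemma xy_anticomm (c : Fin 2) : xy c * xy (c + 1) = -(xy (c + 1) * xy c) := by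
  fin_cases c <;> simp [xy, pauliX, pauliY, Matrix.mul_fin_two]

lemma trace_mul_psd_nonneg {n : Type*} [Fintype n] [DecidableEq n]
    {ρ M : Matrix n n ℂ} (hρ : ρ.PosSemidef) (hM : M.PosSemidef) :
    0 ≤ (ρ * M).trace := by
  obtain ⟨B, hB⟩ : ∃ B : Matrix n n ℂ, ρ = Bᴴ * B := by
    open scoped MatrixOrder in exact CStarAlgebra.nonneg_iff_eq_star_mul_self.mp hρ.nonneg
  have key : (ρ * M).trace = (B * M * Bᴴ).trace := by
    rw [hB, Matrix.mul_assoc, Matrix.trace_mul_comm]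
  rw [key]
  have hP : (B * M * Bᴴ).PosSemidef := hM.mul_mul_conjTranspose_same B
  rw [Matrix.trace]
  apply Finset.sum_nonneg
  intro i _
  have := hP.dotProduct_mulVec_nonneg (Pi.single i 1)
  simpa [dotProduct, Matrix.mulVec_single, Pi.single_apply, Matrix.diag] using this

lemma psd_real_smul {n : Type*} [Fintype n] [DecidableEq n]
    {X : Matrix n n ℂ} (hX : X.PosSemidef) {c : ℝ} (hc : 0 ≤ c) :
    ((c : ℂ) • X).PosSemidef := by
  rw [Matrix.posSemidef_iff_dotProduct_mulVec]
  constructor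
  · show ((c:ℂ) • X)ᴴ = _
    rw [Matrix.conjTranspose_smul, hX.1.eq]
    congr 1
    simp [Complex.conj_ofReal]
  · intro x
    have h := hX.dotProduct_mulVec_nonneg x
    rw [Matrix.smul_mulVec, dotProduct_smul, smul_eq_mul]
    exact mul_nonneg (by exact_mod_cast Complex.zero_le_real.mpr hc) h

lemma trace_real {n : Type*} [Fintype n] [DecidableEq n]
    {ρ X : Matrix n n ℂ} (hρ : ρ.PosSemidef) (hX : Xᴴ = X) :
    (ρ * X).trace = (((ρ * X).trace.re : ℝ) : ℂ) := by
  have h1 : (starRingEnd ℂ) ((ρ * X).trace) = (ρ * X).trace := by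
    show star ((ρ * X).trace) = _
    rw [← Matrix.trace_conjTranspose, Matrix.conjTranspose_mul, hX, hρ.1.eq,
      Matrix.trace_mul_comm]
  exact (Complex.conj_eq_iff_re.mp h1).symm

lemma monogamy {n : Type*} [Fintype n] [DecidableEq n]
    {ρ A B : Matrix n n ℂ} (hρ : ρ.PosSemidef) (htr : ρ.trace = 1)
    (hA : Aᴴ = A) (hB : Bᴴ = B) (hA2 : A * A = 1) (hB2 : B * B = 1)
    (hAB : A * B = -(B * A)) :
    ((ρ * A).trace.re) ^ 2 + ((ρ * B).trace.re) ^ 2 ≤ 1 := by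
  set a := (ρ * A).trace.re with ha
  set b := (ρ * B).trace.re with hb
  set t := a ^ 2 + b ^ 2 with htdef
  rcases eq_or_lt_of_le (by positivity : (0:ℝ) ≤ t) with h0 | ht
  · rw [← h0]; norm_num
  set s := Real.sqrt t with hsdef
  have hs2 : s * s = t := Real.mul_self_sqrt ht.le
  have hs0 : 0 < s := Real.sqrt_pos.mpr ht
  set C : Matrix n n ℂ := (a : ℂ) • A + (b : ℂ) • B with hCdef
  have hC2 : C * C = ((t : ℝ) : ℂ) • 1 := by
    have hcast : ((t : ℝ) : ℂ) = (a:ℂ) * a + (b:ℂ) * b := by push_cast [htdef]; ring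
    rw [hcast]
    simp only [hCdef, add_mul, mul_add, smul_mul_assoc, mul_smul_comm, hA2, hB2, hAB,
      smul_smul, smul_neg, add_smul]
    module
  have hCH : Cᴴ = C := by
    simp [hCdef, Matrix.conjTranspose_smul, hA, hB, Complex.conj_ofReal]
  set M : Matrix n n ℂ := ((s : ℝ) : ℂ) • 1 - C with hMdef
  have hMH : Mᴴ = M := by
    simp [hMdef, Matrix.conjTranspose_smul, hCH, Complex.conj_ofReal]
  have hM2 : M * M = ((2 * s : ℝ) : ℂ) • M := by
    simp only [hMdef, sub_mul, mul_sub, smul_mul_assoc, mul_smul_comm, one_mul, mul_one,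
      hC2, smul_smul, smul_sub]
    rw [show ((s:ℝ):ℂ) * ((s:ℝ):ℂ) = ((t:ℝ):ℂ) by push_cast [← hs2]; ring,
        show ((2*s:ℝ):ℂ) * ((s:ℝ):ℂ) = ((t:ℝ):ℂ) + ((t:ℝ):ℂ) by push_cast [← hs2]; ring]
    rw [add_smul]
    push_cast
    module
  have hMpsd : M.PosSemidef := by
    have hrep : M = ((1 / (2 * s) : ℝ) : ℂ) • (Mᴴ * M) := by
      rw [hMH, hM2, smul_smul]
      rw [show ((1 / (2*s):ℝ):ℂ) * ((2*s:ℝ):ℂ) = 1 by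
        push_cast; field_simp]
      rw [one_smul]
    rw [hrep]
    exact psd_real_smul (Matrix.posSemidef_conjTranspose_mul_self M) (by positivity)
  have htrM : (ρ * M).trace = ((s - t : ℝ) : ℂ) := by
    have hta : (ρ * A).trace = ((a : ℝ) : ℂ) := trace_real hρ hA
    have htb : (ρ * B).trace = ((b : ℝ) : ℂ) := trace_real hρ hB
    rw [hMdef, hCdef]
    simp only [Matrix.mul_sub, Matrix.mul_add, Matrix.mul_smul, Matrix.mul_one,
      Matrix.trace_sub, Matrix.trace_add, Matrix.trace_smul, htr, hta, htb, smul_eq_mul,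
      mul_one]
    push_cast [htdef]
    ring
  have hnn : 0 ≤ (ρ * M).trace := trace_mul_psd_nonneg hρ hMpsd
  rw [htrM] at hnn
  have hts : t ≤ s := by
    have := (Complex.zero_le_real).mp hnn
    linarith
  nlinarith [hs2, hs0, ht]

/-- For every 3-qubit density matrix (an arbitrary, possibly entangled state),
`Q(ρ) ≤ 4`, the independence number of the anticommutativity graph of the
operator set. -/
theorem three_qubit_Q_le_four
    (ρ : Matrix (Fin 3 → Fin 2) (Fin 3 → Fin 2) ℂ)
    (hρ : IsDensityMatrix ρ) :
    Q3 ρ ≤ 4 := by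
  obtain ⟨hpsd, htr⟩ := hρ
  set S : (Fin 3 → Fin 2) → Matrix (Fin 3 → Fin 2) (Fin 3 → Fin 2) ℂ :=
    fun f => kron3 (fun m => xy (f m)) with hSdef
  set g : (Fin 3 → Fin 2) → (Fin 3 → Fin 2) := fun f m => f m + 1 with hgdef
  have hginv : Function.Involutive g := by
    intro f; funext m
    show f m + 1 + 1 = f m
    revert m; intro m; exact (by decide : ∀ x : Fin 2, x + 1 + 1 = x) (f m)
  have hSH : ∀ f, (S f)ᴴ = S f := fun f => by
    rw [hSdef]; rw [kron3_conjTranspose]; simp only [xy_herm]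
  have hS2 : ∀ f, S f * S f = 1 := fun f => by
    rw [hSdef]; simp only; rw [kron3_mul]; simp only [xy_mul_self]; exact kron3_one
  have hSanti : ∀ f, S f * S (g f) = -(S (g f) * S f) := fun f => by
    rw [hSdef]; simp only
    rw [kron3_mul, kron3_mul]
    rw [show (fun m => xy (f m) * xy (g f m)) = fun m => -(xy (g f m) * xy (f m)) by
      funext m; exact xy_anticomm (f m)]
    exact kron3_neg _
  set a : (Fin 3 → Fin 2) → ℝ := fun f => (ρ * S f).trace.re with hadef
  have key : ∀ f, a f ^ 2 + a (g f) ^ 2 ≤ 1 := fun f =>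
    monogamy hpsd htr (hSH f) (hSH (g f)) (hS2 f) (hS2 (g f)) (hSanti f)
  have hQ : Q3 ρ = ∑ f : Fin 3 → Fin 2, a f ^ 2 := rfl
  have hswap : ∑ f : Fin 3 → Fin 2, a (g f) ^ 2 = ∑ f : Fin 3 → Fin 2, a f ^ 2 :=
    Function.Bijective.sum_comp hginv.bijective (fun f => a f ^ 2)
  have hsum : (∑ f : Fin 3 → Fin 2, a f ^ 2) + (∑ f : Fin 3 → Fin 2, a f ^ 2) ≤ 8 := by
    calc (∑ f : Fin 3 → Fin 2, a f ^ 2) + (∑ f : Fin 3 → Fin 2, a f ^ 2)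
        = ∑ f : Fin 3 → Fin 2, (a f ^ 2 + a (g f) ^ 2) := by
          rw [Finset.sum_add_distrib, hswap]
      _ ≤ ∑ _f : Fin 3 → Fin 2, (1:ℝ) := Finset.sum_le_sum fun f _ => key f
      _ = 8 := by simp [Fintype.card_fun]
  rw [hQ]; linarith
end
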